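/- Let k ≥ 1 and let a₁,…,a_k be positive pairwise distinct real numbers. (i) For any c₀,…,c_k > 0, the smooth curve γ : ℝ → ℝ^{2k+1}, γ(t) = (c₀, c₁cos(a₁t), c₁sin(a₁t), …, c_k cos(a_k t), c_k sin(a_k t)), satisfies det(γ(t), γ'(t), …, γ^{(2k)}(t)) > 0 for all t ∈ ℝ. (ii) For any c₁,…,c_k > 0, the smooth curve γ : ℝ → ℝ^{2k}, γ(t) = (c₁cos(a₁t), c₁sin(a₁t), …, c_k cos(a_k t), c_k sin(a_k t)), satisfies det(γ(t), γ'(t), …, γ^{(2k−1)}(t)) > 0 for all t ∈ ℝ. In both cases, if in addition the sum of the squares of the coefficients c_i equals 1, then |γ(t)| = 1 for all t. -/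

import Mathlib

open Matrix
open scoped Classical

noncomputable section

def IsSignedPerm {m : ℕ} (Q : Matrix (Fin m) (Fin m) ℝ) : Prop :=
  (∀ i, ∃! j, Q i j ≠ 0) ∧ (∀ j, ∃! i, Q i j ≠ 0) ∧
    ∀ i j, Q i j ≠ 0 → Q i j = 1 ∨ Q i j = -1

def NE {m : ℕ} (Q : Matrix (Fin m) (Fin m) ℝ) (i j : Fin m) : ℕ :=
  (Finset.univ.filter fun p : Fin m × Fin m => p.1 < i ∧ j < p.2 ∧ Q p.1 p.2 ≠ 0).card

def SW {m : ℕ} (Q : Matrix (Fin m) (Fin m) ℝ) (i j : Fin m) : ℕ := NE Qᵀ j i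

def deltaRow {m : ℕ} (Q : Matrix (Fin m) (Fin m) ℝ) (i : Fin m) : ℝ :=
  ∑ j, Q i j * (-1 : ℝ) ^ NE Q i j

def DeltaM {m : ℕ} (Q : Matrix (Fin m) (Fin m) ℝ) : Matrix (Fin m) (Fin m) ℝ :=
  Matrix.diagonal (deltaRow Q)

def sFun {m : ℕ} (Q : Matrix (Fin m) (Fin m) ℝ) : ℝ := (DeltaM Q).trace

def Jplus (m : ℕ) : Matrix (Fin m) (Fin m) ℝ :=
  Matrix.diagonal fun i => (-1 : ℝ) ^ (i : ℕ)

def TR {m : ℕ} (Q : Matrix (Fin m) (Fin m) ℝ) : Matrix (Fin m) (Fin m) ℝ :=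
  Jplus m * Qᵀ * Jplus m

def Amat (m : ℕ) : Matrix (Fin m) (Fin m) ℝ :=
  Matrix.of fun i j => if (i : ℕ) + (j : ℕ) = m - 1 then (-1 : ℝ) ^ (i : ℕ) else 0

def AD {m : ℕ} (Q : Matrix (Fin m) (Fin m) ℝ) : Matrix (Fin m) (Fin m) ℝ :=
  (Amat m)ᵀ * Q * Amat m

def IsUpperPos {m : ℕ} (R : Matrix (Fin m) (Fin m) ℝ) : Prop :=
  (∀ i j, j < i → R i j = 0) ∧ ∀ i, 0 < R i i

def Wmat {m : ℕ} (γ : ℝ → Fin m → ℝ) (t : ℝ) : Matrix (Fin m) (Fin m) ℝ :=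
  Matrix.of fun i j => iteratedDeriv (j : ℕ) γ t i

def Wronskian {m : ℕ} (γ : ℝ → Fin m → ℝ) (t : ℝ) : ℝ := (Wmat γ t).det

def PosLocConv {m : ℕ} (γ : ℝ → Fin m → ℝ) : Prop :=
  ∀ t ∈ Set.Icc (0 : ℝ) 1, 0 < Wronskian γ t

def IsFrameAt {m : ℕ} (γ : ℝ → Fin m → ℝ) (t : ℝ) (F : Matrix (Fin m) (Fin m) ℝ) : Prop :=
  Fᵀ * F = 1 ∧ F.det = 1 ∧ ∃ R, IsUpperPos R ∧ Wmat γ t = F * R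

def IsFrenet {m : ℕ} (γ : ℝ → Fin m → ℝ) (F : ℝ → Matrix (Fin m) (Fin m) ℝ) : Prop :=
  ∀ t ∈ Set.Icc (0 : ℝ) 1, IsFrameAt γ t (F t)

def e1 {m : ℕ} : Fin m → ℝ := fun i => if (i : ℕ) = 0 then 1 else 0

def frobNorm {m : ℕ} (M : Matrix (Fin m) (Fin m) ℝ) : ℝ :=
  Real.sqrt (∑ i, ∑ j, (M i j) ^ 2)

def gammaOdd (k : ℕ) (a c : ℕ → ℝ) : ℝ → Fin (2*k+1) → ℝ := fun t i =>
  if (i : ℕ) = 0 then c 0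
  else if (i : ℕ) % 2 = 1 then c (((i : ℕ) + 1) / 2) * Real.cos (a (((i : ℕ) + 1) / 2) * t)
  else c ((i : ℕ) / 2) * Real.sin (a ((i : ℕ) / 2) * t)

def gammaEven (k : ℕ) (a c : ℕ → ℝ) : ℝ → Fin (2*k) → ℝ := fun t i =>
  if (i : ℕ) % 2 = 0 then c ((i : ℕ) / 2 + 1) * Real.cos (a ((i : ℕ) / 2 + 1) * t)
  else c (((i : ℕ) + 1) / 2) * Real.sin (a (((i : ℕ) + 1) / 2) * t)

/-- n-th derivative pattern of cos -/
def dc (n : ℕ) (θ : ℝ) : ℝ :=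
  if n % 4 = 0 then Real.cos θ else if n % 4 = 1 then -Real.sin θ
  else if n % 4 = 2 then -Real.cos θ else Real.sin θ

def ds (n : ℕ) (θ : ℝ) : ℝ :=
  if n % 4 = 0 then Real.sin θ else if n % 4 = 1 then Real.cos θ
  else if n % 4 = 2 then -Real.sin θ else -Real.cos θ

lemma dc_zero (θ : ℝ) : dc 0 θ = Real.cos θ := by simp [dc]
lemma ds_zero (θ : ℝ) : ds 0 θ = Real.sin θ := by simp [ds]

lemma dc_even (p : ℕ) : dc (2*p) 0 = (-1 : ℝ)^p := by
  rcases Nat.even_or_odd p with ⟨q, hq⟩ | ⟨q, hq⟩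
  · have h : (2*p) % 4 = 0 := by omega
    have hp : Even p := ⟨q, hq⟩
    simp [dc, h, hp.neg_one_pow]
  · have h : (2*p) % 4 = 2 := by omega
    have hp : Odd p := ⟨q, by omega⟩
    simp [dc, h, hp.neg_one_pow]

lemma dc_odd (p : ℕ) : dc (2*p+1) 0 = 0 := by
  rcases Nat.even_or_odd p with ⟨q, hq⟩ | ⟨q, hq⟩
  · have h : (2*p+1) % 4 = 1 := by omega
    simp [dc, h]
  · have h : (2*p+1) % 4 = 3 := by omega
    simp [dc, h]

lemma ds_even (p : ℕ) : ds (2*p) 0 = 0 := by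
  rcases Nat.even_or_odd p with ⟨q, hq⟩ | ⟨q, hq⟩
  · have h : (2*p) % 4 = 0 := by omega
    simp [ds, h]
  · have h : (2*p) % 4 = 2 := by omega
    simp [ds, h]

lemma ds_odd (p : ℕ) : ds (2*p+1) 0 = (-1 : ℝ)^p := by
  rcases Nat.even_or_odd p with ⟨q, hq⟩ | ⟨q, hq⟩
  · have h : (2*p+1) % 4 = 1 := by omega
    have hp : Even p := ⟨q, hq⟩
    simp [ds, h, hp.neg_one_pow]
  · have h : (2*p+1) % 4 = 3 := by omega
    have hp : Odd p := ⟨q, by omega⟩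
    simp [ds, h, hp.neg_one_pow]

lemma hasDerivAt_dc (n : ℕ) (a t : ℝ) :
    HasDerivAt (fun t => dc n (a*t)) (a * dc (n+1) (a*t)) t := by
  have hd : HasDerivAt (fun t : ℝ => a * t) a t := by
    simpa using (hasDerivAt_id t).const_mul a
  have h : n % 4 = 0 ∨ n % 4 = 1 ∨ n % 4 = 2 ∨ n % 4 = 3 := by omega
  rcases h with h | h | h | h <;>
    [ (have h' : (n+1) % 4 = 1 := by omega);
      (have h' : (n+1) % 4 = 2 := by omega);
      (have h' : (n+1) % 4 = 3 := by omega);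
      (have h' : (n+1) % 4 = 0 := by omega) ] <;>
    simp only [dc, h, h', if_true, if_false, reduceIte, Nat.reduceEqDiff] <;>
    [ (convert hd.cos using 1; norm_num; ring);
      (exact (hd.sin).fun_neg.congr_deriv (by ring));
      (exact (hd.cos).fun_neg.congr_deriv (by ring));
      (convert hd.sin using 1; norm_num; ring) ]

lemma hasDerivAt_ds (n : ℕ) (a t : ℝ) :
    HasDerivAt (fun t => ds n (a*t)) (a * ds (n+1) (a*t)) t := by
  have hd : HasDerivAt (fun t : ℝ => a * t) a t := by
    simpa using (hasDerivAt_id t).const_mul a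
  have h : n % 4 = 0 ∨ n % 4 = 1 ∨ n % 4 = 2 ∨ n % 4 = 3 := by omega
  rcases h with h | h | h | h <;>
    [ (have h' : (n+1) % 4 = 1 := by omega);
      (have h' : (n+1) % 4 = 2 := by omega);
      (have h' : (n+1) % 4 = 3 := by omega);
      (have h' : (n+1) % 4 = 0 := by omega) ] <;>
    simp only [ds, h, h', if_true, if_false, reduceIte, Nat.reduceEqDiff] <;>
    [ (convert hd.sin using 1; norm_num; ring);
      (convert (hd.cos) using 1; norm_num; ring);
      (exact (hd.sin).fun_neg.congr_deriv (by ring));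
      (exact (hd.cos).fun_neg.congr_deriv (by ring)) ]

lemma dc_rot (n : ℕ) (θ : ℝ) :
    dc n θ = Real.cos θ * dc n 0 - Real.sin θ * ds n 0 := by
  have h : n % 4 = 0 ∨ n % 4 = 1 ∨ n % 4 = 2 ∨ n % 4 = 3 := by omega
  rcases h with h | h | h | h <;> simp [dc, ds, h] <;> try ring

lemma ds_rot (n : ℕ) (θ : ℝ) :
    ds n θ = Real.sin θ * dc n 0 + Real.cos θ * ds n 0 := by
  have h : n % 4 = 0 ∨ n % 4 = 1 ∨ n % 4 = 2 ∨ n % 4 = 3 := by omega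
  rcases h with h | h | h | h <;> simp [dc, ds, h] <;> try ring

lemma sum_two {m : ℕ} (f : Fin m → ℝ) (p q : Fin m) (hpq : p ≠ q)
    (h : ∀ x, x ≠ p → x ≠ q → f x = 0) : ∑ x, f x = f p + f q := by
  rw [show f p + f q = ∑ x ∈ ({p, q} : Finset (Fin m)), f x by
    rw [Finset.sum_pair hpq]]
  refine (Finset.sum_subset (Finset.subset_univ _) ?_).symm
  intro x _ hx
  simp only [Finset.mem_insert, Finset.mem_singleton, not_or] at hx
  exact h x hx.1 hx.2

lemma iter_even (k : ℕ) (a c : ℕ → ℝ) (n : ℕ) :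
    iteratedDeriv n (gammaEven k a c) = fun t (i : Fin (2*k)) =>
      if (i : ℕ) % 2 = 0 then c ((i : ℕ)/2 + 1) * a ((i : ℕ)/2 + 1) ^ n * dc n (a ((i : ℕ)/2 + 1) * t)
      else c ((i : ℕ)/2 + 1) * a ((i : ℕ)/2 + 1) ^ n * ds n (a ((i : ℕ)/2 + 1) * t) := by
  induction n with
  | zero =>
    funext t i
    simp only [iteratedDeriv_zero, gammaEven, pow_zero, dc_zero, ds_zero, mul_one]
    rcases Nat.even_or_odd (i : ℕ) with ⟨q, hq⟩ | ⟨q, hq⟩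
    · have h2 : (i : ℕ) % 2 = 0 := by omega
      simp [h2]
    · have h2 : (i : ℕ) % 2 = 1 := by omega
      have h3 : ((i : ℕ) + 1) / 2 = (i : ℕ)/2 + 1 := by omega
      simp [h2, h3]
  | succ n ih =>
    funext t
    rw [iteratedDeriv_succ, ih]
    refine HasDerivAt.deriv ?_
    refine hasDerivAt_pi.2 fun i => ?_
    rcases Nat.even_or_odd (i : ℕ) with ⟨q, hq⟩ | ⟨q, hq⟩
    · have h2 : (i : ℕ) % 2 = 0 := by omega
      simp only [h2, if_true, reduceIte]
      have := (hasDerivAt_dc n (a ((i : ℕ)/2 + 1)) t).const_mul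
        (c ((i : ℕ)/2 + 1) * a ((i : ℕ)/2 + 1) ^ n)
      exact this.congr_deriv (by ring)
    · have h2 : ¬ ((i : ℕ) % 2 = 0) := by omega
      simp only [h2, if_false, reduceIte]
      have := (hasDerivAt_ds n (a ((i : ℕ)/2 + 1)) t).const_mul
        (c ((i : ℕ)/2 + 1) * a ((i : ℕ)/2 + 1) ^ n)
      exact this.congr_deriv (by ring)

def WE (k : ℕ) (a c : ℕ → ℝ) : Matrix (Fin (2*k)) (Fin (2*k)) ℝ :=
  Matrix.of fun i j =>
    if (i : ℕ) % 2 = 0 then c ((i : ℕ)/2 + 1) * a ((i : ℕ)/2 + 1) ^ (j : ℕ) * dc (j : ℕ) 0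
    else c ((i : ℕ)/2 + 1) * a ((i : ℕ)/2 + 1) ^ (j : ℕ) * ds (j : ℕ) 0

def RE (k : ℕ) (a : ℕ → ℝ) (t : ℝ) : Matrix (Fin (2*k)) (Fin (2*k)) ℝ :=
  Matrix.of fun i j =>
    if (i : ℕ)/2 = (j : ℕ)/2 then
      (if (i : ℕ) % 2 = 0 then
        (if (j : ℕ) % 2 = 0 then Real.cos (a ((i : ℕ)/2 + 1) * t)
         else -Real.sin (a ((i : ℕ)/2 + 1) * t))
       else
        (if (j : ℕ) % 2 = 0 then Real.sin (a ((i : ℕ)/2 + 1) * t)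
         else Real.cos (a ((i : ℕ)/2 + 1) * t)))
    else 0

lemma wmatE (k : ℕ) (a c : ℕ → ℝ) (t : ℝ) :
    Wmat (gammaEven k a c) t = RE k a t * WE k a c := by
  ext i j
  have hi := i.isLt
  have hpk : 2 * ((i : ℕ)/2) < 2*k := by omega
  have hqk : 2 * ((i : ℕ)/2) + 1 < 2*k := by omega
  obtain ⟨p, hpv⟩ : ∃ p : Fin (2*k), (p : ℕ) = 2 * ((i : ℕ)/2) := ⟨⟨_, hpk⟩, rfl⟩
  obtain ⟨q, hqv⟩ : ∃ q : Fin (2*k), (q : ℕ) = 2 * ((i : ℕ)/2) + 1 := ⟨⟨_, hqk⟩, rfl⟩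
  have hpq : p ≠ q := by
    intro h; rw [Fin.ext_iff, hpv, hqv] at h; omega
  rw [Matrix.mul_apply, sum_two _ p q hpq]
  · have hp2 : (p : ℕ) % 2 = 0 := by omega
    have hq2 : (q : ℕ) % 2 = 1 := by omega
    have hq2' : ¬ ((q : ℕ) % 2 = 0) := by omega
    have hpd : (p : ℕ) / 2 = (i : ℕ)/2 := by omega
    have hqd : (q : ℕ) / 2 = (i : ℕ)/2 := by omega
    simp only [Wmat, Matrix.of_apply, iter_even, RE, WE, hp2, hq2', hpd, hqd, if_pos rfl,
      if_true, if_false, reduceIte]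
    rcases Nat.even_or_odd (i : ℕ) with ⟨r, hr⟩ | ⟨r, hr⟩
    · have h2 : (i : ℕ) % 2 = 0 := by omega
      simp only [h2, reduceIte]
      rw [dc_rot (j : ℕ) (a ((i : ℕ)/2 + 1) * t)]
      ring
    · have h2' : ¬ ((i : ℕ) % 2 = 0) := by omega
      simp only [h2', reduceIte]
      rw [ds_rot (j : ℕ) (a ((i : ℕ)/2 + 1) * t)]
      ring
  · intro x hxp hxq
    have h1 : (x : ℕ) ≠ (p : ℕ) := fun h => hxp (Fin.ext h)
    have h2 : (x : ℕ) ≠ (q : ℕ) := fun h => hxq (Fin.ext h)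
    have hx : (x : ℕ)/2 ≠ (i : ℕ)/2 := by omega
    have hcond : ¬ ((i : ℕ)/2 = (x : ℕ)/2) := fun h => hx h.symm
    have : RE k a t i x = 0 := by
      simp only [RE, Matrix.of_apply, if_neg hcond]
    rw [this, zero_mul]

lemma RE_mul (k : ℕ) (a : ℕ → ℝ) (t s : ℝ) :
    RE k a t * RE k a s = RE k a (t + s) := by
  ext i j
  have hi := i.isLt
  have hpk : 2 * ((i : ℕ)/2) < 2*k := by omega
  have hqk : 2 * ((i : ℕ)/2) + 1 < 2*k := by omega
  obtain ⟨p, hpv⟩ : ∃ p : Fin (2*k), (p : ℕ) = 2 * ((i : ℕ)/2) := ⟨⟨_, hpk⟩, rfl⟩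
  obtain ⟨q, hqv⟩ : ∃ q : Fin (2*k), (q : ℕ) = 2 * ((i : ℕ)/2) + 1 := ⟨⟨_, hqk⟩, rfl⟩
  have hpq : p ≠ q := by
    intro h; rw [Fin.ext_iff, hpv, hqv] at h; omega
  rw [Matrix.mul_apply, sum_two _ p q hpq]
  · have hp2 : (p : ℕ) % 2 = 0 := by omega
    have hq2' : ¬ ((q : ℕ) % 2 = 0) := by omega
    have hpd : (p : ℕ) / 2 = (i : ℕ)/2 := by omega
    have hqd : (q : ℕ) / 2 = (i : ℕ)/2 := by omega
    by_cases hij : (i : ℕ)/2 = (j : ℕ)/2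
    · simp only [RE, Matrix.of_apply, hp2, hq2', hpd, hqd, hij, if_pos rfl, if_true, if_false,
        reduceIte]
      rw [← hij]
      have hadd : a ((i : ℕ)/2 + 1) * (t + s)
          = a ((i : ℕ)/2 + 1) * t + a ((i : ℕ)/2 + 1) * s := by ring
      by_cases h2 : (i : ℕ) % 2 = 0 <;> by_cases h3 : (j : ℕ) % 2 = 0 <;>
        simp only [h2, h3, if_true, if_false, reduceIte, hadd, Real.cos_add, Real.sin_add] <;>
        ring
    · simp only [RE, Matrix.of_apply, hpd, hqd, hij, if_neg hij, if_false, reduceIte]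
      ring
  · intro x hxp hxq
    have h1 : (x : ℕ) ≠ (p : ℕ) := fun h => hxp (Fin.ext h)
    have h2 : (x : ℕ) ≠ (q : ℕ) := fun h => hxq (Fin.ext h)
    have hcond : ¬ ((i : ℕ)/2 = (x : ℕ)/2) := by omega
    have : RE k a t i x = 0 := by
      simp only [RE, Matrix.of_apply, if_neg hcond]
    rw [this, zero_mul]

lemma RE_zero (k : ℕ) (a : ℕ → ℝ) : RE k a 0 = 1 := by
  ext i j
  simp only [RE, Matrix.of_apply, mul_zero, Real.cos_zero, Real.sin_zero, neg_zero,
    Matrix.one_apply]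
  by_cases hij : (i : ℕ)/2 = (j : ℕ)/2
  · by_cases h2 : (i : ℕ) % 2 = 0 <;> by_cases h3 : (j : ℕ) % 2 = 0
    · have : i = j := by apply Fin.ext; omega
      simp [hij, h2, h3, this]
    · have : ¬ (i = j) := by intro h; rw [Fin.ext_iff] at h; omega
      simp [hij, h2, h3, this]
    · have : ¬ (i = j) := by intro h; rw [Fin.ext_iff] at h; omega
      simp [hij, h2, h3, this]
    · have : i = j := by apply Fin.ext; omega
      simp [hij, h2, h3, this]
  · have : ¬ (i = j) := by intro h; rw [Fin.ext_iff] at h; omega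
    simp [hij, this]

lemma RE_det_pos (k : ℕ) (a : ℕ → ℝ) (t : ℝ) : 0 < (RE k a t).det := by
  have h1 : (RE k a t).det * (RE k a (-t)).det = 1 := by
    rw [← Matrix.det_mul, RE_mul]
    simp [RE_zero]
  have h2 : (RE k a t).det = (RE k a (t/2)).det * (RE k a (t/2)).det := by
    rw [← Matrix.det_mul, RE_mul]
    norm_num
  have h3 : (RE k a t).det ≠ 0 := by
    intro h; rw [h, zero_mul] at h1; exact zero_ne_one h1
  have h4 : 0 ≤ (RE k a t).det := h2 ▸ mul_self_nonneg _
  exact lt_of_le_of_ne h4 (Ne.symm h3)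

def eI (k : ℕ) : Fin k ⊕ Fin k ≃ Fin (2*k) where
  toFun := Sum.elim (fun l => ⟨2*(l:ℕ), by have := l.isLt; omega⟩)
    (fun l => ⟨2*(l:ℕ)+1, by have := l.isLt; omega⟩)
  invFun i := if (i : ℕ) % 2 = 0 then Sum.inl ⟨(i:ℕ)/2, by have := i.isLt; omega⟩
    else Sum.inr ⟨(i:ℕ)/2, by have := i.isLt; omega⟩
  left_inv := by
    rintro (l | l) <;> dsimp only [Sum.elim_inl, Sum.elim_inr]
    · rw [if_pos (by omega)]
      exact congrArg Sum.inl (Fin.ext (by simp only [Fin.val_mk]; omega))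
    · rw [if_neg (by omega)]
      exact congrArg Sum.inr (Fin.ext (by simp only [Fin.val_mk]; omega))
  right_inv := by
    intro i
    dsimp only
    by_cases h : (i : ℕ) % 2 = 0
    · rw [if_pos h]
      dsimp only [Sum.elim_inl]
      exact Fin.ext (by simp only [Fin.val_mk]; omega)
    · rw [if_neg h]
      dsimp only [Sum.elim_inr]
      exact Fin.ext (by simp only [Fin.val_mk]; omega)

lemma neg_sq_pow (x : ℝ) (p : ℕ) : (-(x^2))^p = (-1)^p * x^(2*p) := by
  rw [neg_pow, pow_mul]

def XM (k : ℕ) (a c : ℕ → ℝ) : Matrix (Fin k) (Fin k) ℝ :=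
  Matrix.of fun l p => c ((l:ℕ)+1) * (-(a ((l:ℕ)+1))^2)^(p:ℕ)

def YM (k : ℕ) (a c : ℕ → ℝ) : Matrix (Fin k) (Fin k) ℝ :=
  Matrix.of fun l p => (c ((l:ℕ)+1) * a ((l:ℕ)+1)) * (-(a ((l:ℕ)+1))^2)^(p:ℕ)

lemma WE_submatrix (k : ℕ) (a c : ℕ → ℝ) :
    (WE k a c).submatrix (eI k) (eI k) = Matrix.fromBlocks (XM k a c) 0 0 (YM k a c) := by
  ext x y
  rcases x with l | l <;> rcases y with p | p <;>
    simp only [Matrix.submatrix_apply, eI, Equiv.coe_fn_mk, Sum.elim_inl, Sum.elim_inr,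
      WE, XM, YM, Matrix.of_apply, Matrix.fromBlocks_apply₁₁, Matrix.fromBlocks_apply₁₂,
      Matrix.fromBlocks_apply₂₁, Matrix.fromBlocks_apply₂₂, Matrix.zero_apply]
  · rw [if_pos (by omega : (2*(l:ℕ)) % 2 = 0)]
    have h1 : 2*(l:ℕ)/2 = (l:ℕ) := by omega
    rw [h1, dc_even, neg_sq_pow]
    ring
  · rw [if_pos (by omega : (2*(l:ℕ)) % 2 = 0), dc_odd]
    ring
  · rw [if_neg (by omega : ¬ ((2*(l:ℕ)+1) % 2 = 0)), ds_even]
    ring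
  · rw [if_neg (by omega : ¬ ((2*(l:ℕ)+1) % 2 = 0))]
    have h1 : (2*(l:ℕ)+1)/2 = (l:ℕ) := by omega
    rw [h1, ds_odd, neg_sq_pow, pow_succ]
    ring

lemma XM_eq (k : ℕ) (a c : ℕ → ℝ) :
    XM k a c = Matrix.diagonal (fun l : Fin k => c ((l:ℕ)+1)) *
      Matrix.vandermonde (fun l : Fin k => -(a ((l:ℕ)+1))^2) := by
  ext l p
  rw [Matrix.diagonal_mul]
  simp [XM, Matrix.vandermonde]

lemma YM_eq (k : ℕ) (a c : ℕ → ℝ) :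
    YM k a c = Matrix.diagonal (fun l : Fin k => c ((l:ℕ)+1) * a ((l:ℕ)+1)) *
      Matrix.vandermonde (fun l : Fin k => -(a ((l:ℕ)+1))^2) := by
  ext l p
  rw [Matrix.diagonal_mul]
  simp [YM, Matrix.vandermonde]

lemma vdm_ne_zero (k : ℕ) (a : ℕ → ℝ)
    (ha : ∀ l, 1 ≤ l → l ≤ k → 0 < a l)
    (hdist : ∀ l l', 1 ≤ l → l ≤ k → 1 ≤ l' → l' ≤ k → l ≠ l' → a l ≠ a l') :
    (Matrix.vandermonde (fun l : Fin k => -(a ((l:ℕ)+1))^2)).det ≠ 0 := by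
  rw [Matrix.det_vandermonde_ne_zero_iff]
  intro l l' h
  by_contra hne
  have hb1 : 1 ≤ (l:ℕ)+1 := by omega
  have hb2 : (l:ℕ)+1 ≤ k := by have := l.isLt; omega
  have hb3 : 1 ≤ (l':ℕ)+1 := by omega
  have hb4 : (l':ℕ)+1 ≤ k := by have := l'.isLt; omega
  have hne' : (l:ℕ)+1 ≠ (l':ℕ)+1 := by
    intro hh; exact hne (Fin.ext (by omega))
  have hA := hdist _ _ hb1 hb2 hb3 hb4 hne'
  have h1 := ha _ hb1 hb2
  have h2 := ha _ hb3 hb4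
  have hsq : (a ((l:ℕ)+1))^2 = (a ((l':ℕ)+1))^2 := by
    have := neg_inj.mp h
    linarith [neg_inj.mp h]
  rcases lt_or_gt_of_ne hA with hlt | hgt <;> nlinarith

lemma detWE_pos (k : ℕ) (a c : ℕ → ℝ)
    (ha : ∀ l, 1 ≤ l → l ≤ k → 0 < a l)
    (hdist : ∀ l l', 1 ≤ l → l ≤ k → 1 ≤ l' → l' ≤ k → l ≠ l' → a l ≠ a l')
    (hc : ∀ l, 1 ≤ l → l ≤ k → 0 < c l) :
    0 < (WE k a c).det := by
  have hd : (WE k a c).det = (XM k a c).det * (YM k a c).det := by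
    rw [← Matrix.det_submatrix_equiv_self (eI k), WE_submatrix,
      Matrix.det_fromBlocks_zero₂₁]
  set V := (Matrix.vandermonde (fun l : Fin k => -(a ((l:ℕ)+1))^2)).det with hV
  have hx : (XM k a c).det = (∏ l : Fin k, c ((l:ℕ)+1)) * V := by
    rw [XM_eq, Matrix.det_mul, Matrix.det_diagonal]
  have hy : (YM k a c).det = (∏ l : Fin k, c ((l:ℕ)+1) * a ((l:ℕ)+1)) * V := by
    rw [YM_eq, Matrix.det_mul, Matrix.det_diagonal]
  have hb : ∀ l : Fin k, 1 ≤ (l:ℕ)+1 ∧ (l:ℕ)+1 ≤ k := fun l => ⟨by omega, by have := l.isLt; omega⟩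
  have hc1 : 0 < ∏ l : Fin k, c ((l:ℕ)+1) :=
    Finset.prod_pos fun l _ => hc _ (hb l).1 (hb l).2
  have hc2 : 0 < ∏ l : Fin k, c ((l:ℕ)+1) * a ((l:ℕ)+1) :=
    Finset.prod_pos fun l _ => mul_pos (hc _ (hb l).1 (hb l).2) (ha _ (hb l).1 (hb l).2)
  have hVne : V ≠ 0 := vdm_ne_zero k a ha hdist
  have hVsq : 0 < V * V := by
    rcases hVne.lt_or_gt with h | h
    · exact mul_pos_of_neg_of_neg h h
    · exact mul_pos h h
  calc (0:ℝ) < ((∏ l : Fin k, c ((l:ℕ)+1)) * (∏ l : Fin k, c ((l:ℕ)+1) * a ((l:ℕ)+1))) * (V * V) :=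
        mul_pos (mul_pos hc1 hc2) hVsq
    _ = (WE k a c).det := by rw [hd, hx, hy]; ring

lemma normE (k : ℕ) (a c : ℕ → ℝ) (t : ℝ) :
    ∑ i, (gammaEven k a c t i)^2 = ∑ l ∈ Finset.Icc 1 k, (c l)^2 := by
  have h1 : ∑ i, (gammaEven k a c t i)^2
      = ∑ x : Fin k ⊕ Fin k, (gammaEven k a c t (eI k x))^2 :=
    (Equiv.sum_comp (eI k) (fun i => (gammaEven k a c t i)^2)).symm
  rw [h1, Fintype.sum_sum_type]
  have h2 : ∀ l : Fin k, (gammaEven k a c t (eI k (Sum.inl l)))^2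
      + (gammaEven k a c t (eI k (Sum.inr l)))^2 = (c ((l:ℕ)+1))^2 := by
    intro l
    have hv1 : ((eI k (Sum.inl l)) : ℕ) = 2*(l:ℕ) := rfl
    have hv2 : ((eI k (Sum.inr l)) : ℕ) = 2*(l:ℕ)+1 := rfl
    simp only [gammaEven, hv1, hv2]
    rw [if_pos (by omega : (2*(l:ℕ)) % 2 = 0), if_neg (by omega : ¬ ((2*(l:ℕ)+1) % 2 = 0))]
    have e1 : 2*(l:ℕ)/2 + 1 = (l:ℕ)+1 := by omega
    have e2 : (2*(l:ℕ)+1+1)/2 = (l:ℕ)+1 := by omega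
    rw [e1, e2]
    have := Real.sin_sq_add_cos_sq (a ((l:ℕ)+1) * t)
    nlinarith [this]
  rw [← Finset.sum_add_distrib]
  rw [Finset.sum_congr rfl fun l _ => h2 l]
  rw [Fin.sum_univ_eq_sum_range (fun l => (c (l+1))^2) k]
  rw [show Finset.Icc 1 k = Finset.Ico 1 (k+1) by rw [Finset.Ico_add_one_right_eq_Icc]]
  rw [Finset.sum_Ico_eq_sum_range]
  simp only [Nat.add_sub_cancel]
  exact Finset.sum_congr rfl fun i _ => by rw [Nat.add_comm]

lemma iter_odd (k : ℕ) (a c : ℕ → ℝ) (n : ℕ) :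
    iteratedDeriv n (gammaOdd k a c) = fun t (i : Fin (2*k+1)) =>
      if (i : ℕ) = 0 then (if n = 0 then c 0 else 0)
      else if (i : ℕ) % 2 = 1 then
        c (((i : ℕ)+1)/2) * a (((i : ℕ)+1)/2) ^ n * dc n (a (((i : ℕ)+1)/2) * t)
      else c (((i : ℕ)+1)/2) * a (((i : ℕ)+1)/2) ^ n * ds n (a (((i : ℕ)+1)/2) * t) := by
  induction n with
  | zero =>
    funext t i
    simp only [iteratedDeriv_zero, gammaOdd, pow_zero, dc_zero, ds_zero, mul_one]
    by_cases h0 : (i : ℕ) = 0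
    · simp [h0]
    · rcases Nat.even_or_odd (i : ℕ) with ⟨q, hq⟩ | ⟨q, hq⟩
      · have h2 : ¬ ((i : ℕ) % 2 = 1) := by omega
        have h3 : ((i : ℕ) + 1) / 2 = (i : ℕ)/2 := by omega
        simp [h0, h2, h3]
      · have h2 : (i : ℕ) % 2 = 1 := by omega
        simp [h0, h2]
  | succ n ih =>
    funext t
    rw [iteratedDeriv_succ, ih]
    refine HasDerivAt.deriv ?_
    refine hasDerivAt_pi.2 fun i => ?_
    by_cases h0 : (i : ℕ) = 0
    · simp only [h0, if_pos, if_true, reduceIte, Nat.succ_ne_zero]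
      exact hasDerivAt_const t _
    · rcases Nat.even_or_odd (i : ℕ) with ⟨q, hq⟩ | ⟨q, hq⟩
      · have h2 : ¬ ((i : ℕ) % 2 = 1) := by omega
        simp only [h0, h2, if_false, reduceIte]
        have := (hasDerivAt_ds n (a (((i : ℕ)+1)/2)) t).const_mul
          (c (((i : ℕ)+1)/2) * a (((i : ℕ)+1)/2) ^ n)
        exact this.congr_deriv (by ring)
      · have h2 : (i : ℕ) % 2 = 1 := by omega
        simp only [h0, h2, if_true, if_false, reduceIte]
        have := (hasDerivAt_dc n (a (((i : ℕ)+1)/2)) t).const_mul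
          (c (((i : ℕ)+1)/2) * a (((i : ℕ)+1)/2) ^ n)
        exact this.congr_deriv (by ring)

def WO (k : ℕ) (a c : ℕ → ℝ) : Matrix (Fin (2*k+1)) (Fin (2*k+1)) ℝ :=
  Matrix.of fun i j =>
    if (i : ℕ) = 0 then (if (j : ℕ) = 0 then c 0 else 0)
    else if (i : ℕ) % 2 = 1 then
      c (((i : ℕ)+1)/2) * a (((i : ℕ)+1)/2) ^ (j : ℕ) * dc (j : ℕ) 0
    else c (((i : ℕ)+1)/2) * a (((i : ℕ)+1)/2) ^ (j : ℕ) * ds (j : ℕ) 0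

def RO (k : ℕ) (a : ℕ → ℝ) (t : ℝ) : Matrix (Fin (2*k+1)) (Fin (2*k+1)) ℝ :=
  Matrix.of fun i j =>
    if (i : ℕ) = 0 then (if (j : ℕ) = 0 then 1 else 0)
    else if (j : ℕ) = 0 then 0
    else if ((i : ℕ)+1)/2 = ((j : ℕ)+1)/2 then
      (if (i : ℕ) % 2 = 1 then
        (if (j : ℕ) % 2 = 1 then Real.cos (a (((i : ℕ)+1)/2) * t)
         else -Real.sin (a (((i : ℕ)+1)/2) * t))
       else
        (if (j : ℕ) % 2 = 1 then Real.sin (a (((i : ℕ)+1)/2) * t)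
         else Real.cos (a (((i : ℕ)+1)/2) * t)))
    else 0

lemma wmatO (k : ℕ) (a c : ℕ → ℝ) (t : ℝ) :
    Wmat (gammaOdd k a c) t = RO k a t * WO k a c := by
  ext i j
  rw [Matrix.mul_apply]
  by_cases h0 : (i : ℕ) = 0
  · rw [Finset.sum_eq_single (0 : Fin (2*k+1))]
    · have hz : ((0 : Fin (2*k+1)) : ℕ) = 0 := rfl
      simp only [Wmat, Matrix.of_apply, iter_odd, RO, WO, h0, hz, if_pos rfl, if_true, reduceIte]
      by_cases hj : (j : ℕ) = 0 <;> simp [hj]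
    · intro x _ hx
      have hxv : (x : ℕ) ≠ 0 := fun h => hx (Fin.ext (by simpa using h))
      have : RO k a t i x = 0 := by
        simp only [RO, Matrix.of_apply, h0, if_pos rfl, if_true, reduceIte, if_neg hxv]
      rw [this, zero_mul]
    · intro h
      exact absurd (Finset.mem_univ _) h
  · have hi := i.isLt
    have hl1 : 1 ≤ ((i : ℕ)+1)/2 := by omega
    have hl2 : ((i : ℕ)+1)/2 ≤ k := by omega
    have hpk : 2 * (((i : ℕ)+1)/2) - 1 < 2*k+1 := by omega
    have hqk : 2 * (((i : ℕ)+1)/2) < 2*k+1 := by omega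
    obtain ⟨p, hpv⟩ : ∃ p : Fin (2*k+1), (p : ℕ) = 2 * (((i : ℕ)+1)/2) - 1 := ⟨⟨_, hpk⟩, rfl⟩
    obtain ⟨q, hqv⟩ : ∃ q : Fin (2*k+1), (q : ℕ) = 2 * (((i : ℕ)+1)/2) := ⟨⟨_, hqk⟩, rfl⟩
    have hpq : p ≠ q := by
      intro h; rw [Fin.ext_iff, hpv, hqv] at h; omega
    rw [sum_two _ p q hpq]
    · have hp0 : ¬ ((p : ℕ) = 0) := by omega
      have hq0 : ¬ ((q : ℕ) = 0) := by omega
      have hp2 : (p : ℕ) % 2 = 1 := by omega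
      have hq2 : ¬ ((q : ℕ) % 2 = 1) := by omega
      have hpd : ((p : ℕ)+1) / 2 = ((i : ℕ)+1)/2 := by omega
      have hqd : ((q : ℕ)+1) / 2 = ((i : ℕ)+1)/2 := by omega
      simp only [Wmat, Matrix.of_apply, iter_odd, RO, WO, h0, hp0, hq0, hp2, hq2, hpd, hqd,
        if_pos rfl, if_true, if_false, reduceIte]
      rcases Nat.even_or_odd (i : ℕ) with ⟨r, hr⟩ | ⟨r, hr⟩
      · have h2 : ¬ ((i : ℕ) % 2 = 1) := by omega
        simp only [h2, if_false, reduceIte]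
        rw [ds_rot (j : ℕ) (a (((i : ℕ)+1)/2) * t)]
        ring
      · have h2 : (i : ℕ) % 2 = 1 := by omega
        simp only [h2, if_true, reduceIte]
        rw [dc_rot (j : ℕ) (a (((i : ℕ)+1)/2) * t)]
        ring
    · intro x hxp hxq
      have h1 : (x : ℕ) ≠ (p : ℕ) := fun h => hxp (Fin.ext h)
      have h2 : (x : ℕ) ≠ (q : ℕ) := fun h => hxq (Fin.ext h)
      have : RO k a t i x = 0 := by
        by_cases hx0 : (x : ℕ) = 0
        · simp only [RO, Matrix.of_apply, h0, hx0, if_neg h0, if_pos, if_true, reduceIte]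
        · have hcond : ¬ (((i : ℕ)+1)/2 = ((x : ℕ)+1)/2) := by omega
          simp only [RO, Matrix.of_apply, if_neg h0, if_neg hx0, if_neg hcond]
      rw [this, zero_mul]

lemma RO_mul (k : ℕ) (a : ℕ → ℝ) (t s : ℝ) :
    RO k a t * RO k a s = RO k a (t + s) := by
  ext i j
  rw [Matrix.mul_apply]
  by_cases h0 : (i : ℕ) = 0
  · rw [Finset.sum_eq_single (0 : Fin (2*k+1))]
    · have hz : ((0 : Fin (2*k+1)) : ℕ) = 0 := rfl
      simp only [RO, Matrix.of_apply, h0, hz, if_pos rfl, if_true, reduceIte]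
      rw [one_mul]
    · intro x _ hx
      have hxv : (x : ℕ) ≠ 0 := fun h => hx (Fin.ext (by simpa using h))
      have : RO k a t i x = 0 := by
        simp only [RO, Matrix.of_apply, h0, if_pos rfl, if_true, reduceIte, if_neg hxv]
      rw [this, zero_mul]
    · intro h
      exact absurd (Finset.mem_univ _) h
  · have hi := i.isLt
    have hl1 : 1 ≤ ((i : ℕ)+1)/2 := by omega
    have hl2 : ((i : ℕ)+1)/2 ≤ k := by omega
    have hpk : 2 * (((i : ℕ)+1)/2) - 1 < 2*k+1 := by omega
    have hqk : 2 * (((i : ℕ)+1)/2) < 2*k+1 := by omega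
    obtain ⟨p, hpv⟩ : ∃ p : Fin (2*k+1), (p : ℕ) = 2 * (((i : ℕ)+1)/2) - 1 := ⟨⟨_, hpk⟩, rfl⟩
    obtain ⟨q, hqv⟩ : ∃ q : Fin (2*k+1), (q : ℕ) = 2 * (((i : ℕ)+1)/2) := ⟨⟨_, hqk⟩, rfl⟩
    have hpq : p ≠ q := by
      intro h; rw [Fin.ext_iff, hpv, hqv] at h; omega
    rw [sum_two _ p q hpq]
    · have hp0 : ¬ ((p : ℕ) = 0) := by omega
      have hq0 : ¬ ((q : ℕ) = 0) := by omega
      have hp2 : (p : ℕ) % 2 = 1 := by omega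
      have hq2 : ¬ ((q : ℕ) % 2 = 1) := by omega
      have hpd : ((p : ℕ)+1) / 2 = ((i : ℕ)+1)/2 := by omega
      have hqd : ((q : ℕ)+1) / 2 = ((i : ℕ)+1)/2 := by omega
      by_cases hj0 : (j : ℕ) = 0
      · simp only [RO, Matrix.of_apply, h0, hp0, hq0, hj0, if_pos rfl, if_neg h0,
          if_true, if_false, reduceIte]
        ring
      · by_cases hij : ((i : ℕ)+1)/2 = ((j : ℕ)+1)/2
        · simp only [RO, Matrix.of_apply, h0, hp0, hq0, hj0, hp2, hq2, hpd, hqd, hij,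
            if_pos rfl, if_neg h0, if_neg hj0, if_true, if_false, reduceIte]
          rw [← hij]
          have hadd : a (((i : ℕ)+1)/2) * (t + s)
              = a (((i : ℕ)+1)/2) * t + a (((i : ℕ)+1)/2) * s := by ring
          by_cases h2 : (i : ℕ) % 2 = 1 <;> by_cases h3 : (j : ℕ) % 2 = 1 <;>
            simp only [h2, h3, if_true, if_false, reduceIte, hadd, Real.cos_add,
              Real.sin_add] <;> ring
        · have hpj : ¬ (((p : ℕ)+1)/2 = ((j : ℕ)+1)/2) := by omega
          have hqj : ¬ (((q : ℕ)+1)/2 = ((j : ℕ)+1)/2) := by omega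
          simp only [RO, Matrix.of_apply, h0, hp0, hq0, hj0, hij, hpj, hqj,
            if_neg h0, if_neg hj0, if_false, reduceIte]
          ring
    · intro x hxp hxq
      have h1 : (x : ℕ) ≠ (p : ℕ) := fun h => hxp (Fin.ext h)
      have h2 : (x : ℕ) ≠ (q : ℕ) := fun h => hxq (Fin.ext h)
      have : RO k a t i x = 0 := by
        by_cases hx0 : (x : ℕ) = 0
        · simp only [RO, Matrix.of_apply, h0, hx0, if_neg h0, if_pos, if_true, reduceIte]
        · have hcond : ¬ (((i : ℕ)+1)/2 = ((x : ℕ)+1)/2) := by omega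
          simp only [RO, Matrix.of_apply, if_neg h0, if_neg hx0, if_neg hcond]
      rw [this, zero_mul]

lemma RO_zero (k : ℕ) (a : ℕ → ℝ) : RO k a 0 = 1 := by
  ext i j
  simp only [RO, Matrix.of_apply, mul_zero, Real.cos_zero, Real.sin_zero, neg_zero,
    Matrix.one_apply]
  by_cases h0 : (i : ℕ) = 0
  · by_cases hj0 : (j : ℕ) = 0
    · have : i = j := Fin.ext (by omega)
      simp [h0, hj0, this]
    · have : ¬ (i = j) := fun h => hj0 (by rw [Fin.ext_iff] at h; omega)
      simp [h0, hj0, this]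
  · by_cases hj0 : (j : ℕ) = 0
    · have : ¬ (i = j) := fun h => h0 (by rw [Fin.ext_iff] at h; omega)
      simp [h0, hj0, this]
    · by_cases hij : ((i : ℕ)+1)/2 = ((j : ℕ)+1)/2
      · by_cases h2 : (i : ℕ) % 2 = 1 <;> by_cases h3 : (j : ℕ) % 2 = 1
        · have : i = j := Fin.ext (by omega)
          simp [h0, hj0, hij, h2, h3, this]
        · have : ¬ (i = j) := fun h => by rw [Fin.ext_iff] at h; omega
          simp [h0, hj0, hij, h2, h3, this]
        · have : ¬ (i = j) := fun h => by rw [Fin.ext_iff] at h; omega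
          simp [h0, hj0, hij, h2, h3, this]
        · have : i = j := Fin.ext (by omega)
          simp [h0, hj0, hij, h2, h3, this]
      · have : ¬ (i = j) := fun h => by rw [Fin.ext_iff] at h; omega
        simp [h0, hj0, hij, this]

lemma RO_det_pos (k : ℕ) (a : ℕ → ℝ) (t : ℝ) : 0 < (RO k a t).det := by
  have h1 : (RO k a t).det * (RO k a (-t)).det = 1 := by
    rw [← Matrix.det_mul, RO_mul]
    simp [RO_zero]
  have h2 : (RO k a t).det = (RO k a (t/2)).det * (RO k a (t/2)).det := by
    rw [← Matrix.det_mul, RO_mul]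
    norm_num
  have h3 : (RO k a t).det ≠ 0 := by
    intro h; rw [h, zero_mul] at h1; exact zero_ne_one h1
  have h4 : 0 ≤ (RO k a t).det := h2 ▸ mul_self_nonneg _
  exact lt_of_le_of_ne h4 (Ne.symm h3)

def eO (k : ℕ) : Fin 1 ⊕ (Fin k ⊕ Fin k) ≃ Fin (2*k+1) where
  toFun := Sum.elim (fun _ => ⟨0, by omega⟩)
    (Sum.elim (fun l => ⟨2*(l:ℕ)+1, by have := l.isLt; omega⟩)
      (fun l => ⟨2*(l:ℕ)+2, by have := l.isLt; omega⟩))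
  invFun i :=
    if h0 : (i : ℕ) = 0 then Sum.inl ⟨0, by omega⟩
    else if h2 : (i : ℕ) % 2 = 1 then
      Sum.inr (Sum.inl ⟨((i:ℕ)-1)/2, by have := i.isLt; omega⟩)
    else Sum.inr (Sum.inr ⟨((i:ℕ)-2)/2, by have := i.isLt; omega⟩)
  left_inv := by
    rintro (z | l | l) <;> dsimp only [Sum.elim_inl, Sum.elim_inr]
    · rw [dif_pos rfl]
      exact congrArg Sum.inl (by
        apply Fin.ext
        have := z.isLt
        simp only [Fin.val_mk]
        omega)
    · rw [dif_neg (by omega), dif_pos (by omega)]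
      exact congrArg Sum.inr (congrArg Sum.inl (Fin.ext (by simp only [Fin.val_mk]; omega)))
    · rw [dif_neg (by omega), dif_neg (by omega)]
      exact congrArg Sum.inr (congrArg Sum.inr (Fin.ext (by simp only [Fin.val_mk]; omega)))
  right_inv := by
    intro i
    dsimp only
    by_cases h0 : (i : ℕ) = 0
    · rw [dif_pos h0]
      dsimp only [Sum.elim_inl]
      exact Fin.ext (by simp only [Fin.val_mk]; omega)
    · rw [dif_neg h0]
      by_cases h2 : (i : ℕ) % 2 = 1
      · rw [dif_pos h2]
        dsimp only [Sum.elim_inr, Sum.elim_inl]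
        exact Fin.ext (by simp only [Fin.val_mk]; omega)
      · rw [dif_neg h2]
        dsimp only [Sum.elim_inr]
        exact Fin.ext (by simp only [Fin.val_mk]; omega)

def XO (k : ℕ) (a c : ℕ → ℝ) : Matrix (Fin k) (Fin k) ℝ :=
  Matrix.of fun l p => (c ((l:ℕ)+1) * (-(a ((l:ℕ)+1))^2)) * (-(a ((l:ℕ)+1))^2)^(p:ℕ)

def BO (k : ℕ) (c : ℕ → ℝ) : Matrix (Fin k ⊕ Fin k) (Fin 1) ℝ :=
  Matrix.of fun r _ => Sum.elim (fun l : Fin k => c ((l:ℕ)+1)) (fun _ => 0) r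

lemma WO_submatrix (k : ℕ) (a c : ℕ → ℝ) :
    (WO k a c).submatrix (eO k) (eO k) =
      Matrix.fromBlocks (Matrix.of fun _ _ => c 0) 0 (BO k c)
        (Matrix.fromBlocks 0 (XO k a c) (YM k a c) 0) := by
  ext x y
  rcases x with z | l | l <;> rcases y with w | p | p <;>
    simp only [Matrix.submatrix_apply, eO, Equiv.coe_fn_mk, Sum.elim_inl, Sum.elim_inr,
      WO, XO, YM, BO, Matrix.of_apply, Matrix.fromBlocks_apply₁₁, Matrix.fromBlocks_apply₁₂,
      Matrix.fromBlocks_apply₂₁, Matrix.fromBlocks_apply₂₂, Matrix.zero_apply]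
  · simp
  · simp
  · simp
  · rw [if_neg (by omega), if_pos (by omega)]
    have h1 : (2*(l:ℕ)+1+1)/2 = (l:ℕ)+1 := by omega
    rw [h1]
    simp [dc_zero]
  · rw [if_neg (by omega), if_pos (by omega), dc_odd]
    ring
  · rw [if_neg (by omega), if_pos (by omega)]
    have h1 : (2*(l:ℕ)+1+1)/2 = (l:ℕ)+1 := by omega
    have h2 : (2*(p:ℕ)+2) = 2*((p:ℕ)+1) := by ring
    have key : (c ((l:ℕ)+1) * (-(a ((l:ℕ)+1))^2)) * (-(a ((l:ℕ)+1))^2)^(p:ℕ)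
        = c ((l:ℕ)+1) * ((-1:ℝ)^((p:ℕ)+1) * (a ((l:ℕ)+1))^(2*((p:ℕ)+1))) := by
      rw [← neg_sq_pow]
      rw [pow_succ]
      ring
    rw [h1, h2, dc_even, key]
    ring
  · rw [if_neg (by omega), if_neg (by omega)]
    have h1 : (2*(l:ℕ)+2+1)/2 = (l:ℕ)+1 := by omega
    rw [h1]
    simp [ds_zero]
  · rw [if_neg (by omega), if_neg (by omega)]
    have h1 : (2*(l:ℕ)+2+1)/2 = (l:ℕ)+1 := by omega
    rw [h1, ds_odd, neg_sq_pow]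
    ring
  · rw [if_neg (by omega), if_neg (by omega)]
    have h2 : (2*(p:ℕ)+2) = 2*((p:ℕ)+1) := by ring
    rw [h2, ds_even]
    ring

lemma det_swap_blocks (k : ℕ) :
    (Matrix.fromBlocks (0 : Matrix (Fin k) (Fin k) ℝ) (1 : Matrix (Fin k) (Fin k) ℝ) (1 : Matrix (Fin k) (Fin k) ℝ) 0).det = (-1 : ℝ)^k := by
  have hU : (Matrix.fromBlocks (1 : Matrix (Fin k) (Fin k) ℝ) (1 : Matrix (Fin k) (Fin k) ℝ) 0 (1 : Matrix (Fin k) (Fin k) ℝ)).det = 1 := by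
    rw [Matrix.det_fromBlocks_zero₂₁, Matrix.det_one, one_mul]
  have hL : (Matrix.fromBlocks (1 : Matrix (Fin k) (Fin k) ℝ) 0 (-1 : Matrix (Fin k) (Fin k) ℝ) (1 : Matrix (Fin k) (Fin k) ℝ)).det = 1 := by
    rw [Matrix.det_fromBlocks_zero₁₂, Matrix.det_one, one_mul]
  have hS : (Matrix.fromBlocks (0 : Matrix (Fin k) (Fin k) ℝ) (1 : Matrix (Fin k) (Fin k) ℝ) (-1 : Matrix (Fin k) (Fin k) ℝ) 0)
      = Matrix.fromBlocks (1 : Matrix (Fin k) (Fin k) ℝ) (1 : Matrix (Fin k) (Fin k) ℝ) 0 (1 : Matrix (Fin k) (Fin k) ℝ) *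
        Matrix.fromBlocks (1 : Matrix (Fin k) (Fin k) ℝ) 0 (-1 : Matrix (Fin k) (Fin k) ℝ) (1 : Matrix (Fin k) (Fin k) ℝ) *
        Matrix.fromBlocks (1 : Matrix (Fin k) (Fin k) ℝ) (1 : Matrix (Fin k) (Fin k) ℝ) 0 (1 : Matrix (Fin k) (Fin k) ℝ) := by
    rw [Matrix.fromBlocks_multiply, Matrix.fromBlocks_multiply]
    simp
  have hD : (Matrix.fromBlocks (-1 : Matrix (Fin k) (Fin k) ℝ) 0 0 (1 : Matrix (Fin k) (Fin k) ℝ)).det = (-1:ℝ)^k := by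
    rw [Matrix.det_fromBlocks_zero₂₁, Matrix.det_one, mul_one]
    rw [show (-1 : Matrix (Fin k) (Fin k) ℝ) = -(1 : Matrix (Fin k) (Fin k) ℝ) from rfl,
      Matrix.det_neg, Matrix.det_one, Fintype.card_fin, mul_one]
  have hJ : (Matrix.fromBlocks (0 : Matrix (Fin k) (Fin k) ℝ) (1 : Matrix (Fin k) (Fin k) ℝ) (1 : Matrix (Fin k) (Fin k) ℝ) 0)
      = Matrix.fromBlocks (0 : Matrix (Fin k) (Fin k) ℝ) (1 : Matrix (Fin k) (Fin k) ℝ) (-1 : Matrix (Fin k) (Fin k) ℝ) 0 *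
        Matrix.fromBlocks (-1 : Matrix (Fin k) (Fin k) ℝ) 0 0 (1 : Matrix (Fin k) (Fin k) ℝ) := by
    rw [Matrix.fromBlocks_multiply]
    simp
  rw [hJ, Matrix.det_mul, hD, hS, Matrix.det_mul, Matrix.det_mul, hU, hL]
  ring

lemma det_antidiag_blocks (k : ℕ) (B C : Matrix (Fin k) (Fin k) ℝ) :
    (Matrix.fromBlocks 0 B C 0).det = (-1:ℝ)^k * B.det * C.det := by
  have h : Matrix.fromBlocks (0 : Matrix (Fin k) (Fin k) ℝ) B C 0
      = Matrix.fromBlocks B 0 0 C * Matrix.fromBlocks (0 : Matrix (Fin k) (Fin k) ℝ) (1 : Matrix (Fin k) (Fin k) ℝ) (1 : Matrix (Fin k) (Fin k) ℝ) 0 := by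
    rw [Matrix.fromBlocks_multiply]
    simp
  rw [h, Matrix.det_mul, det_swap_blocks, Matrix.det_fromBlocks_zero₂₁]
  ring

lemma XO_eq (k : ℕ) (a c : ℕ → ℝ) :
    XO k a c = Matrix.diagonal (fun l : Fin k => c ((l:ℕ)+1) * (-(a ((l:ℕ)+1))^2)) *
      Matrix.vandermonde (fun l : Fin k => -(a ((l:ℕ)+1))^2) := by
  ext l p
  rw [Matrix.diagonal_mul]
  simp [XO, Matrix.vandermonde]

lemma detWO_pos (k : ℕ) (a c : ℕ → ℝ)
    (ha : ∀ l, 1 ≤ l → l ≤ k → 0 < a l)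
    (hdist : ∀ l l', 1 ≤ l → l ≤ k → 1 ≤ l' → l' ≤ k → l ≠ l' → a l ≠ a l')
    (hc : ∀ l, l ≤ k → 0 < c l) :
    0 < (WO k a c).det := by
  have hd : (WO k a c).det = c 0 * ((-1:ℝ)^k * (XO k a c).det * (YM k a c).det) := by
    rw [← Matrix.det_submatrix_equiv_self (eO k), WO_submatrix,
      Matrix.det_fromBlocks_zero₁₂, det_antidiag_blocks]
    congr 1
    rw [Matrix.det_fin_one]
    rfl
  set V := (Matrix.vandermonde (fun l : Fin k => -(a ((l:ℕ)+1))^2)).det with hV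
  have hb : ∀ l : Fin k, 1 ≤ (l:ℕ)+1 ∧ (l:ℕ)+1 ≤ k := fun l => ⟨by omega, by have := l.isLt; omega⟩
  have hx : (XO k a c).det
      = ((-1:ℝ)^k * ∏ l : Fin k, c ((l:ℕ)+1) * (a ((l:ℕ)+1))^2) * V := by
    rw [XO_eq, Matrix.det_mul, Matrix.det_diagonal]
    congr 1
    have : (fun l : Fin k => c ((l:ℕ)+1) * (-(a ((l:ℕ)+1))^2))
        = fun l : Fin k => (-1:ℝ) * (c ((l:ℕ)+1) * (a ((l:ℕ)+1))^2) := by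
      funext l; ring
    rw [this, Finset.prod_mul_distrib, Finset.prod_const, Finset.card_univ, Fintype.card_fin]
  have hy : (YM k a c).det = (∏ l : Fin k, c ((l:ℕ)+1) * a ((l:ℕ)+1)) * V := by
    rw [YM_eq, Matrix.det_mul, Matrix.det_diagonal]
  have hc1 : 0 < ∏ l : Fin k, c ((l:ℕ)+1) * (a ((l:ℕ)+1))^2 :=
    Finset.prod_pos fun l _ => mul_pos (hc _ (hb l).2)
      (pow_pos (ha _ (hb l).1 (hb l).2) 2)
  have hc2 : 0 < ∏ l : Fin k, c ((l:ℕ)+1) * a ((l:ℕ)+1) :=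
    Finset.prod_pos fun l _ => mul_pos (hc _ (hb l).2) (ha _ (hb l).1 (hb l).2)
  have hVne : V ≠ 0 := vdm_ne_zero k a ha hdist
  have hVsq : 0 < V * V := by
    rcases hVne.lt_or_gt with h | h
    · exact mul_pos_of_neg_of_neg h h
    · exact mul_pos h h
  have hsq : ((-1:ℝ)^k) * ((-1:ℝ)^k) = 1 := by
    rw [← pow_add]
    exact Even.neg_one_pow ⟨k, rfl⟩
  have hc0 : 0 < c 0 := hc 0 (Nat.zero_le k)
  calc (0:ℝ) < c 0 * (((∏ l : Fin k, c ((l:ℕ)+1) * (a ((l:ℕ)+1))^2)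
          * (∏ l : Fin k, c ((l:ℕ)+1) * a ((l:ℕ)+1))) * (V * V)) :=
        mul_pos hc0 (mul_pos (mul_pos hc1 hc2) hVsq)
    _ = (WO k a c).det := by
        rw [hd, hx, hy]
        have expand : (-1:ℝ)^k * (((-1:ℝ)^k * ∏ l : Fin k, c ((l:ℕ)+1) * (a ((l:ℕ)+1))^2) * V)
            * ((∏ l : Fin k, c ((l:ℕ)+1) * a ((l:ℕ)+1)) * V)
            = (((-1:ℝ)^k) * ((-1:ℝ)^k)) * (((∏ l : Fin k, c ((l:ℕ)+1) * (a ((l:ℕ)+1))^2)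
              * (∏ l : Fin k, c ((l:ℕ)+1) * a ((l:ℕ)+1))) * (V * V)) := by ring
        rw [expand, hsq, one_mul]

lemma normO (k : ℕ) (a c : ℕ → ℝ) (t : ℝ) :
    ∑ i, (gammaOdd k a c t i)^2 = ∑ l ∈ Finset.range (k+1), (c l)^2 := by
  have h1 : ∑ i, (gammaOdd k a c t i)^2
      = ∑ x : Fin 1 ⊕ (Fin k ⊕ Fin k), (gammaOdd k a c t (eO k x))^2 :=
    (Equiv.sum_comp (eO k) (fun i => (gammaOdd k a c t i)^2)).symm
  rw [h1, Fintype.sum_sum_type, Fintype.sum_sum_type, Fin.sum_univ_one]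
  have hz : (gammaOdd k a c t (eO k (Sum.inl 0)))^2 = (c 0)^2 := by
    have hv : ((eO k (Sum.inl 0)) : ℕ) = 0 := rfl
    simp [gammaOdd, hv]
  have h2 : ∀ l : Fin k, (gammaOdd k a c t (eO k (Sum.inr (Sum.inl l))))^2
      + (gammaOdd k a c t (eO k (Sum.inr (Sum.inr l))))^2 = (c ((l:ℕ)+1))^2 := by
    intro l
    have hv1 : ((eO k (Sum.inr (Sum.inl l))) : ℕ) = 2*(l:ℕ)+1 := rfl
    have hv2 : ((eO k (Sum.inr (Sum.inr l))) : ℕ) = 2*(l:ℕ)+2 := rfl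
    simp only [gammaOdd, hv1, hv2]
    rw [if_neg (by omega : ¬ (2*(l:ℕ)+1 = 0)), if_neg (by omega : ¬ (2*(l:ℕ)+2 = 0)),
      if_pos (by omega : (2*(l:ℕ)+1) % 2 = 1), if_neg (by omega : ¬ ((2*(l:ℕ)+2) % 2 = 1))]
    have e1 : (2*(l:ℕ)+1+1)/2 = (l:ℕ)+1 := by omega
    have e2 : (2*(l:ℕ)+2)/2 = (l:ℕ)+1 := by omega
    rw [e1]
    try rw [e2]
    have := Real.sin_sq_add_cos_sq (a ((l:ℕ)+1) * t)
    nlinarith [this]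
  rw [hz, ← Finset.sum_add_distrib, Finset.sum_congr rfl fun l _ => h2 l]
  rw [Fin.sum_univ_eq_sum_range (fun l => (c (l+1))^2) k]
  rw [Finset.sum_range_succ' (fun l => (c l)^2) k]
  ring


theorem stmt17 (k : ℕ) (hk : 1 ≤ k) (a : ℕ → ℝ)
    (ha : ∀ l, 1 ≤ l → l ≤ k → 0 < a l)
    (hdist : ∀ l l', 1 ≤ l → l ≤ k → 1 ≤ l' → l' ≤ k → l ≠ l' → a l ≠ a l') :
    (∀ c : ℕ → ℝ, (∀ l, l ≤ k → 0 < c l) →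
      (∀ t : ℝ, 0 < Wronskian (gammaOdd k a c) t) ∧
      ((∑ l ∈ Finset.range (k+1), (c l) ^ 2 = 1) →
        ∀ t : ℝ, ∑ i, (gammaOdd k a c t i) ^ 2 = 1)) ∧
    (∀ c : ℕ → ℝ, (∀ l, 1 ≤ l → l ≤ k → 0 < c l) →
      (∀ t : ℝ, 0 < Wronskian (gammaEven k a c) t) ∧
      ((∑ l ∈ Finset.Icc 1 k, (c l) ^ 2 = 1) →
        ∀ t : ℝ, ∑ i, (gammaEven k a c t i) ^ 2 = 1)) := by
  constructor
  · intro c hc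
    constructor
    · intro t
      simp only [Wronskian]
      rw [wmatO, Matrix.det_mul]
      exact mul_pos (RO_det_pos k a t) (detWO_pos k a c ha hdist hc)
    · intro hsum t
      rw [normO, hsum]
  · intro c hc
    constructor
    · intro t
      simp only [Wronskian]
      rw [wmatE, Matrix.det_mul]
      exact mul_pos (RE_det_pos k a t) (detWE_pos k a c ha hdist hc)
    · intro hsum t
      rw [normE, hsum]
end
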